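/- Cardinality bound: 𝓘_{XY} = { (I(X;U), I(Y;U), I(X,Y;U)) : U an auxiliary random variable whose range has at most |𝒳|·|𝒴| + 2 elements }; i.e., every point of the mutual information region is achieved by some U with |𝒰| ≤ |𝒳|·|𝒴| + 2. -/

import Mathlib

open scoped BigOperators Pointwise Classical

noncomputable section

namespace GW

/-- A probability mass function on a finite type. -/
def IsPMF {α : Type} [Fintype α] (p : α → ℝ) : Prop :=
  (∀ a, 0 ≤ p a) ∧ ∑ a, p a = 1

/-- Distribution (pmf) of the random variable `f` under the pmf `p`. -/
def dist {α β : Type} [Fintype α] (p : α → ℝ) (f : α → β) : β → ℝ :=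
  fun b => ∑ a, if f a = b then p a else 0

/-- Shannon entropy (base 2) of the random variable `f` under the pmf `p`. -/
def H {α β : Type} [Fintype α] [Fintype β] (p : α → ℝ) (f : α → β) : ℝ :=
  ∑ b, -(dist p f b * Real.logb 2 (dist p f b))

/-- Mutual information `I(f; g)` under `p`. -/
def I2 {α β γ : Type} [Fintype α] [Fintype β] [Fintype γ]
    (p : α → ℝ) (f : α → β) (g : α → γ) : ℝ :=
  H p f + H p g - H p (fun a => (f a, g a))

/-- Conditional entropy `H(f | g)` under `p`. -/
def Hc {α β γ : Type} [Fintype α] [Fintype β] [Fintype γ]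
    (p : α → ℝ) (f : α → β) (g : α → γ) : ℝ :=
  H p (fun a => (f a, g a)) - H p g

/-- Conditional mutual information `I(f; g | h)` under `p`. -/
def Ic {α β γ δ : Type} [Fintype α] [Fintype β] [Fintype γ] [Fintype δ]
    (p : α → ℝ) (f : α → β) (g : α → γ) (h : α → δ) : ℝ :=
  Hc p f h + Hc p g h - Hc p (fun a => (f a, g a)) h

/-- Independence of the random variables `f` and `g` under `p`. -/
def Indep {α β γ : Type} [Fintype α] (p : α → ℝ) (f : α → β) (g : α → γ) : Prop :=
  ∀ b c, dist p (fun a => (f a, g a)) (b, c) = dist p f b * dist p g c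

/-- `q` is a joint pmf on `X × Y × U` whose `(X,Y)`-marginal is `p`; i.e. `U` is an
auxiliary random variable defined jointly with `(X,Y)` via a conditional pmf `p_{U|XY}`. -/
def IsAux {X Y U : Type} [Fintype X] [Fintype Y] [Fintype U]
    (p : X × Y → ℝ) (q : X × Y × U → ℝ) : Prop :=
  IsPMF q ∧ ∀ x y, (∑ u, q (x, y, u)) = p (x, y)

/-- Coordinate map onto `X`. -/
def cX {X Y U : Type} : X × Y × U → X := fun a => a.1
/-- Coordinate map onto `Y`. -/
def cY {X Y U : Type} : X × Y × U → Y := fun a => a.2.1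
/-- Coordinate map onto `U`. -/
def cU {X Y U : Type} : X × Y × U → U := fun a => a.2.2
/-- Coordinate map onto `X × Y`. -/
def cXY {X Y U : Type} : X × Y × U → X × Y := fun a => (a.1, a.2.1)

/-- The mutual information region `𝓘_{XY}`. -/
def MIRegion {X Y : Type} [Fintype X] [Fintype Y] (p : X × Y → ℝ) : Set (ℝ × ℝ × ℝ) :=
  { v | ∃ (U : Type) (_ : Fintype U) (q : X × Y × U → ℝ), IsAux p q ∧
      v = (I2 q cX cU, I2 q cY cU, I2 q cXY cU) }

/-- The outer region `𝓘ᵒ_{XY}`. -/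
def OuterRegion {X Y : Type} [Fintype X] [Fintype Y] (p : X × Y → ℝ) : Set (ℝ × ℝ × ℝ) :=
  { v | 0 ≤ v.1 ∧ 0 ≤ v.2.1 ∧ v.1 + v.2.1 - v.2.2 ≤ I2 p Prod.fst Prod.snd ∧
        0 ≤ v.2.2 - v.2.1 ∧ v.2.2 - v.2.1 ≤ Hc p Prod.fst Prod.snd ∧
        0 ≤ v.2.2 - v.1 ∧ v.2.2 - v.1 ≤ Hc p Prod.snd Prod.fst }

/-- Maximal interaction information `G_NNI(X; Y)`. -/
def GNNI {X Y : Type} [Fintype X] [Fintype Y] (p : X × Y → ℝ) : ℝ :=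
  sSup { r | ∃ (U : Type) (_ : Fintype U) (q : X × Y × U → ℝ), IsAux p q ∧
      r = Ic q cX cY cU - I2 p Prod.fst Prod.snd }

/-- Asymmetric private interaction information `G_PNI(X → Y)`. -/
def GPNI {X Y : Type} [Fintype X] [Fintype Y] (p : X × Y → ℝ) : ℝ :=
  sSup { r | ∃ (U : Type) (_ : Fintype U) (q : X × Y × U → ℝ), IsAux p q ∧
      Indep q cU cX ∧ r = Ic q cX cY cU - I2 p Prod.fst Prod.snd }

/-- Symmetric private interaction information `G_PPI(X; Y)`. -/
def GPPI {X Y : Type} [Fintype X] [Fintype Y] (p : X × Y → ℝ) : ℝ :=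
  sSup { r | ∃ (U : Type) (_ : Fintype U) (q : X × Y × U → ℝ), IsAux p q ∧
      Indep q cU cX ∧ Indep q cU cY ∧ r = Ic q cX cY cU - I2 p Prod.fst Prod.snd }



set_option linter.unusedSectionVars false

section Auxiliary

open Module Set Finset

lemma fe_key {E : Type} [NormedAddCommGroup E] [NormedSpace ℝ E]
    {S : Set E} {x : E} {d : ℕ}
    (ι' : Type) [Fintype ι'] (s : Finset ι') (P : ι' → E) (v : ι' → ℝ)
    (hPS : ∀ i ∈ s, P i ∈ S) (hv0 : ∀ i ∈ s, 0 ≤ v i) (hv1 : ∑ i ∈ s, v i = 1)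
    (hvx : ∑ i ∈ s, v i • P i = x) (hcard : (s.image P).card ≤ d) :
    ∃ t : Finset E, ↑t ⊆ S ∧ t.card ≤ d ∧ x ∈ convexHull ℝ (↑t : Set E) := by
  refine ⟨s.image P, ?_, hcard, ?_⟩
  · intro e he
    simp only [Finset.coe_image, Set.mem_image, Finset.mem_coe] at he
    obtain ⟨i, hi, rfl⟩ := he
    exact hPS i hi
  · rw [← hvx, ← Finset.centerMass_eq_of_sum_1 s P hv1]
    exact s.centerMass_mem_convexHull hv0 (by rw [hv1]; norm_num)
      (fun i hi => Finset.mem_coe.mpr (Finset.mem_image_of_mem P hi))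

/-- Fenchel–Eggleston / Carathéodory for path-connected sets: `d` points suffice. -/
lemma fe_lemma {E : Type} [NormedAddCommGroup E] [NormedSpace ℝ E] [FiniteDimensional ℝ E]
    {S : Set E} (hS : IsPathConnected S) {x : E} (hx : x ∈ convexHull ℝ S)
    {d : ℕ} (hd1 : 1 ≤ d) (hdim : Module.finrank ℝ E ≤ d) :
    ∃ t : Finset E, ↑t ⊆ S ∧ t.card ≤ d ∧ x ∈ convexHull ℝ (↑t : Set E) := by
  classical
  obtain ⟨ι, hι, z0, w0, hz0S, hz0ai, hw0pos, hw0sum, hw0x⟩ :=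
    eq_pos_convex_span_of_mem_convexHull hx
  rcases le_or_gt (Fintype.card ι) d with hn | hn
  · refine fe_key ι Finset.univ z0 w0 (fun i _ => hz0S (Set.mem_range_self _))
      (fun i _ => (hw0pos i).le) hw0sum hw0x ?_
    exact le_trans Finset.card_image_le (by simpa using hn)
  · -- exactly d+1 affinely independent points, all weights positive
    have hcard : Fintype.card ι = d + 1 := by
      have h1 := hz0ai.card_le_finrank_succ
      have h2 : finrank ℝ (vectorSpan ℝ (Set.range z0)) ≤ finrank ℝ E := Submodule.finrank_le _
      omega
    set e : Fin (d + 1) ≃ ι := (Fintype.equivFinOfCardEq hcard).symm with he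
    set z : Fin (d + 1) → E := z0 ∘ e with hzdef
    set w : Fin (d + 1) → ℝ := w0 ∘ e with hwdef
    have hz : AffineIndependent ℝ z := hz0ai.comp_embedding e.toEmbedding
    have hwsum : ∑ i, w i = 1 := by rw [← hw0sum]; exact Equiv.sum_comp e w0
    have hwx : ∑ i, w i • z i = x := by
      rw [← hw0x]; exact Equiv.sum_comp e (fun j => w0 j • z0 j)
    have hwpos : ∀ i, 0 < w i := fun i => hw0pos (e i)
    have hzS : ∀ i, z i ∈ S := fun i => hz0S (Set.mem_range_self _)
    obtain ⟨γ, hγ⟩ := (hS.joinedIn (z 0) (hzS 0) (z 1) (hzS 1))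
    set P : ℝ → Fin (d + 1) → E := fun s i => if i = 0 then γ.extend s else z i with hPdef
    have hPmem : ∀ (s : ℝ) (i : Fin (d+1)), P s i ∈ S := by
      intro s i
      by_cases h : i = 0
      · simp only [hPdef, h, if_pos rfl]
        exact hγ _
      · simp only [hPdef, if_neg h]; exact hzS i
    have hP0 : P 0 = z := by
      funext i
      by_cases h : i = 0
      · simp [hPdef, h, Path.extend_zero]
      · simp [hPdef, h]
    set T : Set ℝ := {s | s ∈ Set.Icc (0:ℝ) 1 ∧
        ∃ v ∈ stdSimplex ℝ (Fin (d + 1)), ∑ i, v i • P s i = x} with hTdef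
    have hFcont : Continuous (fun sv : ℝ × (Fin (d+1) → ℝ) => ∑ i, sv.2 i • P sv.1 i) := by
      apply continuous_finset_sum
      intro i _
      apply Continuous.smul ((continuous_apply i).comp continuous_snd)
      by_cases h : i = 0
      · simp only [hPdef, h, if_pos rfl]
        exact γ.continuous_extend.comp continuous_fst
      · simp only [hPdef, if_neg h]; exact continuous_const
    have hK : IsCompact ((Set.Icc (0:ℝ) 1 ×ˢ stdSimplex ℝ (Fin (d+1))) ∩
        {sv : ℝ × (Fin (d+1) → ℝ) | ∑ i, sv.2 i • P sv.1 i = x}) :=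
      (isCompact_Icc.prod (isCompact_stdSimplex ℝ _)).inter_right
        (isClosed_eq hFcont continuous_const)
    have hTeq : T = Prod.fst '' ((Set.Icc (0:ℝ) 1 ×ˢ stdSimplex ℝ (Fin (d+1))) ∩
        {sv : ℝ × (Fin (d+1) → ℝ) | ∑ i, sv.2 i • P sv.1 i = x}) := by
      ext s
      constructor
      · rintro ⟨hIcc, v, hv, hvx⟩
        exact ⟨(s, v), ⟨⟨hIcc, hv⟩, hvx⟩, rfl⟩
      · rintro ⟨⟨s', v⟩, ⟨⟨hIcc, hv⟩, hvx⟩, rfl⟩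
        exact ⟨hIcc, v, hv, hvx⟩
    have hTcomp : IsCompact T := hTeq ▸ hK.image continuous_fst
    have hT0 : (0:ℝ) ∈ T :=
      ⟨⟨le_refl _, zero_le_one⟩, w, ⟨fun i => (hwpos i).le, hwsum⟩, by rw [hP0]; exact hwx⟩
    set tstar : ℝ := sSup T with htstar
    have htT : tstar ∈ T := hTcomp.sSup_mem ⟨0, hT0⟩
    obtain ⟨⟨ht0, ht1⟩, v, ⟨hv0, hv1⟩, hvx⟩ := htT
    by_cases hA : ∃ i, v i = 0
    · obtain ⟨i0, hi0⟩ := hA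
      refine fe_key _ (Finset.univ.erase i0) (P tstar) v
        (fun i _ => hPmem _ _) (fun i _ => hv0 i) ?_ ?_ ?_
      · rw [Finset.sum_erase_eq_sub (Finset.mem_univ i0), hv1, hi0, sub_zero]
      · rw [Finset.sum_erase_eq_sub (Finset.mem_univ i0), hvx, hi0, zero_smul, sub_zero]
      · refine le_trans Finset.card_image_le ?_
        rw [Finset.card_erase_of_mem (Finset.mem_univ i0)]
        simp
    push_neg at hA
    have hvpos : ∀ i, 0 < v i := fun i => (hv0 i).lt_of_ne (Ne.symm (hA i))
    have hone : (1 : Fin (d+1)) ≠ 0 := by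
      have : (1 : Fin (d+1)).val = 1 := by
        rw [Fin.val_one']
        exact Nat.mod_eq_of_lt (by omega)
      intro h
      rw [h] at this
      simp at this
    by_cases ht1' : tstar = 1
    · -- P 1 0 = z 1 = P 1 1, so the image has at most d elements
      have hP10 : P tstar 0 = P tstar 1 := by
        simp only [hPdef, if_pos rfl, if_neg hone, ht1', Path.extend_one]
      refine fe_key _ Finset.univ (P tstar) v (fun i _ => hPmem _ _) (fun i _ => hv0 i)
        hv1 hvx ?_
      have himg : Finset.univ.image (P tstar) = (Finset.univ.erase 0).image (P tstar) := by
        apply Finset.Subset.antisymm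
        · intro y hy
          simp only [Finset.mem_image] at hy ⊢
          obtain ⟨i, _, rfl⟩ := hy
          by_cases h : i = 0
          · exact ⟨1, Finset.mem_erase.mpr ⟨hone, Finset.mem_univ _⟩, by rw [h, ← hP10]⟩
          · exact ⟨i, Finset.mem_erase.mpr ⟨h, Finset.mem_univ _⟩, rfl⟩
        · exact Finset.image_subset_image (Finset.erase_subset _ _)
      rw [himg]
      refine le_trans Finset.card_image_le ?_
      rw [Finset.card_erase_of_mem (Finset.mem_univ _)]
      simp
    have htlt : tstar < 1 := lt_of_le_of_ne ht1 ht1'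
    by_cases hB : AffineIndependent ℝ (P tstar)
    · -- contradiction: can push past tstar
      exfalso
      have hrank : Fintype.card (Fin (d+1)) = finrank ℝ E + 1 := by
        have h1 := hB.card_le_finrank_succ
        have h2 : finrank ℝ (vectorSpan ℝ (Set.range (P tstar))) ≤ finrank ℝ E :=
          Submodule.finrank_le _
        simp only [Fintype.card_fin] at h1 ⊢
        omega
      have htop : affineSpan ℝ (Set.range (P tstar)) = ⊤ :=
        hB.affineSpan_eq_top_iff_card_eq_finrank_add_one.mpr hrank
      set b : AffineBasis (Fin (d+1)) ℝ E := ⟨P tstar, hB, htop⟩ with hbdef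
      have hbi : ∀ i, b i = P tstar i := fun i => rfl
      set c : ℝ → Fin (d+1) → ℝ := fun s i => b.coord i (γ.extend s) with hcdef
      have hgext : γ.extend tstar = b 0 := by
        rw [hbi]; simp [hPdef]
      have hct0 : c tstar 0 = 1 := by rw [hcdef]; simp only [hgext]; exact b.coord_apply_eq 0
      have hctne : ∀ i, i ≠ 0 → c tstar i = 0 := by
        intro i hi
        rw [hcdef]; simp only [hgext]; exact b.coord_apply_ne hi
      set g : ℝ → Fin (d+1) → ℝ :=
        fun s i => if i = 0 then v 0 / c s 0 else v i - (v 0 / c s 0) * c s i with hgdef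
      have hgt : ∀ i, g tstar i = v i := by
        intro i
        by_cases h : i = 0
        · simp [hgdef, h, hct0]
        · simp [hgdef, h, hctne i h]
      have hccont : ∀ i, Continuous (fun s => c s i) := fun i =>
        (continuous_barycentric_coord b i).comp γ.continuous_extend
      have hgcont : ∀ i, ContinuousAt (fun s => g s i) tstar := by
        intro i
        by_cases h : i = 0
        · simp only [hgdef, h, if_pos rfl]
          exact (continuousAt_const.div ((hccont 0).continuousAt) (by rw [hct0]; norm_num))
        · simp only [hgdef, if_neg h]
          exact continuousAt_const.sub
            (((continuousAt_const.div ((hccont 0).continuousAt)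
              (by rw [hct0]; norm_num))).mul ((hccont i).continuousAt))
      have hev : ∀ᶠ s in nhds tstar, ∀ i, 0 < g s i := by
        rw [Filter.eventually_all]
        intro i
        have hpos : (0:ℝ) < g tstar i := by rw [hgt]; exact hvpos i
        exact (hgcont i).preimage_mem_nhds (lt_mem_nhds hpos)
      have hev2 : ∀ᶠ s in nhdsWithin tstar (Set.Ioi tstar),
          (∀ i, 0 < g s i) ∧ s ∈ Set.Ioc tstar 1 :=
        (hev.filter_mono nhdsWithin_le_nhds).and
          (Ioc_mem_nhdsGT_of_mem ⟨le_refl _, htlt⟩)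
      obtain ⟨s, hgs, hsIoc⟩ := hev2.exists
      have hcs0 : 0 < c s 0 := by
        by_contra h
        push_neg at h
        have h1 : g s 0 = v 0 / c s 0 := by simp [hgdef]
        have h2 : v 0 / c s 0 ≤ 0 := div_nonpos_of_nonneg_of_nonpos (hvpos 0).le h
        have := hgs 0
        rw [h1] at this
        linarith
      have hcsne : c s 0 ≠ 0 := ne_of_gt hcs0
      have hsummul : (v 0 / c s 0) * c s 0 = v 0 := div_mul_cancel₀ _ hcsne
      have hsum_c : ∑ i, c s i = 1 := b.sum_coord_apply_eq_one _
      have hgamma : γ.extend s = ∑ i, c s i • P tstar i := by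
        have := b.linear_combination_coord_eq_self (γ.extend s)
        exact this.symm
      -- sum of new weights is 1
      have hcsucc : ∑ i : Fin d, c s i.succ = 1 - c s 0 := by
        rw [Fin.sum_univ_succ] at hsum_c; linarith
      have hvsucc : ∑ i : Fin d, v i.succ = 1 - v 0 := by
        rw [Fin.sum_univ_succ] at hv1; linarith
      have hsg : ∑ i, g s i = 1 := by
        rw [Fin.sum_univ_succ]
        simp only [hgdef, if_pos rfl]
        have : ∀ i : Fin d, (if i.succ = 0 then v 0 / c s 0
            else v i.succ - (v 0 / c s 0) * c s i.succ)
            = v i.succ - (v 0 / c s 0) * c s i.succ := by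
          intro i; rw [if_neg (Fin.succ_ne_zero i)]
        rw [Finset.sum_congr rfl (fun i _ => this i), Finset.sum_sub_distrib,
          ← Finset.mul_sum, hcsucc, hvsucc]
        linear_combination hsummul
      have hsgx : ∑ i, g s i • P s i = x := by
        have hPsucc : ∀ i : Fin d, P s i.succ = P tstar i.succ := by
          intro i; simp [hPdef, Fin.succ_ne_zero i]
        have hP0s : P s 0 = γ.extend s := by simp [hPdef]
        rw [Fin.sum_univ_succ]
        simp only [hgdef, if_pos rfl]
        have hre : ∀ i : Fin d, (if i.succ = 0 then v 0 / c s 0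
            else v i.succ - (v 0 / c s 0) * c s i.succ) • P s i.succ
            = (v i.succ - (v 0 / c s 0) * c s i.succ) • P tstar i.succ := by
          intro i; rw [if_neg (Fin.succ_ne_zero i), hPsucc]
        rw [Finset.sum_congr rfl (fun i _ => hre i), hP0s, hgamma, Finset.smul_sum]
        rw [← hvx, Fin.sum_univ_succ (f := fun i => v i • P tstar i)]
        rw [Fin.sum_univ_succ (f := fun i => (v 0 / c s 0) • (c s i • P tstar i))]
        simp only [smul_smul, sub_smul]
        rw [Finset.sum_sub_distrib]
        rw [hsummul]
        abel
      have hsT : s ∈ T :=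
        ⟨⟨le_trans ht0 hsIoc.1.le, hsIoc.2⟩, g s, ⟨fun i => (hgs i).le, hsg⟩, hsgx⟩
      have : s ≤ tstar := le_csSup hTcomp.bddAbove hsT
      exact absurd this (not_le.mpr hsIoc.1)
    · -- affinely dependent: Carathéodory inside the finite set
      have hxim : x ∈ convexHull ℝ (↑(Finset.univ.image (P tstar)) : Set E) := by
        rw [← hvx, ← Finset.centerMass_eq_of_sum_1 _ _ hv1]
        exact Finset.univ.centerMass_mem_convexHull (fun i _ => hv0 i)
          (by rw [hv1]; norm_num)
          (fun i _ => Finset.mem_coe.mpr (Finset.mem_image_of_mem _ (Finset.mem_univ i)))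
      rw [convexHull_eq_union] at hxim
      simp only [Set.mem_iUnion] at hxim
      obtain ⟨t, hts, hai, hmem⟩ := hxim
      refine ⟨t, ?_, ?_, hmem⟩
      · intro y hy
        have := hts hy
        simp only [Finset.coe_image, Set.mem_image, Finset.mem_coe] at this
        obtain ⟨i, _, rfl⟩ := this
        exact hPmem _ _
      · by_contra hcard'
        push_neg at hcard'
        have htsub : t ⊆ Finset.univ.image (P tstar) := Finset.coe_subset.mp hts
        have himcard : (Finset.univ.image (P tstar)).card ≤ d + 1 :=
          le_trans Finset.card_image_le (by simp)
        have hteq : t = Finset.univ.image (P tstar) :=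
          Finset.eq_of_subset_of_card_le htsub (by have := Finset.card_le_card htsub; omega)
        have himcard2 : (Finset.univ.image (P tstar)).card = d + 1 := by
          rw [← hteq]; have := Finset.card_le_card htsub; omega
        have hinj : Set.InjOn (P tstar) ↑(Finset.univ : Finset (Fin (d+1))) := by
          apply Finset.card_image_iff.mp
          rw [himcard2]; simp
        have hPt : AffineIndependent ℝ (P tstar) := by
          have hmemt : ∀ i : Fin (d+1), P tstar i ∈ t := by
            intro i; rw [hteq]; exact Finset.mem_image_of_mem _ (Finset.mem_univ i)
          have hinj2 : Function.Injective
              (fun i : Fin (d+1) => (⟨P tstar i, hmemt i⟩ : {y // y ∈ t})) := by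
            intro i j hij
            exact hinj (Finset.mem_coe.mpr (Finset.mem_univ i))
              (Finset.mem_coe.mpr (Finset.mem_univ j)) (congrArg Subtype.val hij)
          have := hai.comp_embedding
            (⟨fun i : Fin (d+1) => (⟨P tstar i, hmemt i⟩ : {y // y ∈ t}), hinj2⟩ :
              Fin (d+1) ↪ {y // y ∈ t})
          exact this
        exact hB hPt



/-- entropy of a raw distribution vector -/
def ent {B : Type} [Fintype B] (s : B → ℝ) : ℝ := ∑ b, -(s b * Real.logb 2 (s b))

lemma H_eq_ent {α β : Type} [Fintype α] [Fintype β] (p : α → ℝ) (f : α → β) :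
    H p f = ent (dist p f) := rfl

/-- the U-marginal -/
def margU {X Y U : Type} [Fintype X] [Fintype Y] (q : X × Y × U → ℝ) : U → ℝ :=
  fun u => ∑ a : X × Y, q (a.1, a.2, u)

/-- the conditional distribution of (X,Y) given U = u -/
def condU {X Y U : Type} [Fintype X] [Fintype Y] (q : X × Y × U → ℝ) (u : U) : X × Y → ℝ :=
  fun a => q (a.1, a.2, u) / margU q u

variable {X Y U B : Type} [Fintype X] [Fintype Y] [Fintype U] [Fintype B]

lemma sum_triple (f : X × Y × U → ℝ) : ∑ a, f a = ∑ x, ∑ y, ∑ u, f (x, y, u) := by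
  rw [Fintype.sum_prod_type]
  congr 1
  funext x
  rw [Fintype.sum_prod_type]

lemma phi_mul (x y : ℝ) :
    -(x * y * Real.logb 2 (x * y)) = y * -(x * Real.logb 2 x) + x * -(y * Real.logb 2 y) := by
  rcases eq_or_ne x 0 with hx | hx
  · simp [hx]
  rcases eq_or_ne y 0 with hy | hy
  · simp [hy]
  rw [Real.logb_mul hx hy]
  ring

lemma dist_cU (q : X × Y × U → ℝ) : dist q (cU : X × Y × U → U) = margU q := by
  funext u
  unfold dist cU margU
  rw [sum_triple (f := fun a => if a.2.2 = u then q a else 0)]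
  rw [Fintype.sum_prod_type (f := fun a : X × Y => q (a.1, a.2, u))]
  congr 1; funext x; congr 1; funext y
  simp

lemma margU_nonneg (q : X × Y × U → ℝ) (hq : ∀ a, 0 ≤ q a) (u : U) : 0 ≤ margU q u :=
  Finset.sum_nonneg fun _ _ => hq _

lemma margU_eq_zero (q : X × Y × U → ℝ) (hq : ∀ a, 0 ≤ q a) {u : U}
    (h : margU q u = 0) (a : X × Y) : q (a.1, a.2, u) = 0 := by
  have := (Finset.sum_eq_zero_iff_of_nonneg (fun a _ => hq ((a : X × Y).1, a.2, u))).mp h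
  exact this a (Finset.mem_univ a)

lemma margU_mul_condU (q : X × Y × U → ℝ) (hq : ∀ a, 0 ≤ q a) (u : U) (a : X × Y) :
    margU q u * condU q u a = q (a.1, a.2, u) := by
  rcases eq_or_ne (margU q u) 0 with h | h
  · rw [h, zero_mul, margU_eq_zero q hq h]
  · unfold condU
    field_simp

lemma condU_pmf (q : X × Y × U → ℝ) (hq : ∀ a, 0 ≤ q a) {u : U} (h : margU q u ≠ 0) :
    IsPMF (condU q u) := by
  constructor
  · intro a
    exact div_nonneg (hq _) (margU_nonneg q hq u)
  · unfold condU
    rw [← Finset.sum_div]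
    rw [div_eq_one_iff_eq h]
    rfl

lemma dist_pair (q : X × Y × U → ℝ) (hq : ∀ a, 0 ≤ q a) (g : X × Y → B) (b : B) (u : U) :
    dist q (fun a => (g (cXY a), cU a)) (b, u) = margU q u * dist (condU q u) g b := by
  unfold dist
  rw [Finset.mul_sum]
  have : ∀ a : X × Y, margU q u * (if g a = b then condU q u a else 0)
      = if g a = b then q (a.1, a.2, u) else 0 := by
    intro a
    rcases eq_or_ne (g a) b with h | h
    · rw [if_pos h, if_pos h, margU_mul_condU q hq]
    · simp [h]
  rw [Finset.sum_congr rfl (fun a _ => this a)]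
  rw [sum_triple]
  rw [Fintype.sum_prod_type (f := fun a : X × Y => if g a = b then q (a.1, a.2, u) else 0)]
  congr 1; funext x; congr 1; funext y
  unfold cXY cU
  simp only [Prod.mk.injEq]
  rcases eq_or_ne (g (x, y)) b with h | h
  · simp [h]
  · simp [h]

lemma sum_dist (s : X × Y → ℝ) (g : X × Y → B) : ∑ b, dist s g b = ∑ a, s a := by
  unfold dist
  rw [Finset.sum_comm]
  congr 1; funext a
  simp

/-- the chain rule for entropy -/
lemma H_pair_chain (q : X × Y × U → ℝ) (hq : ∀ a, 0 ≤ q a) (g : X × Y → B) :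
    H q (fun a => (g (cXY a), cU a)) =
      H q (cU : X × Y × U → U) + ∑ u, margU q u * ent (dist (condU q u) g) := by
  rw [H_eq_ent, H_eq_ent]
  unfold ent
  rw [Fintype.sum_prod_type (f := fun bu : B × U =>
    -(dist q (fun a => (g (cXY a), cU a)) bu * Real.logb 2 (dist q (fun a => (g (cXY a), cU a)) bu)))]
  have step : ∀ b u, -(dist q (fun a => (g (cXY a), cU a)) (b, u) *
      Real.logb 2 (dist q (fun a => (g (cXY a), cU a)) (b, u)))
      = dist (condU q u) g b * -(margU q u * Real.logb 2 (margU q u))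
        + margU q u * -(dist (condU q u) g b * Real.logb 2 (dist (condU q u) g b)) := by
    intro b u
    rw [dist_pair q hq g b u, phi_mul]
  simp only [step]
  rw [Finset.sum_comm]
  rw [← Finset.sum_add_distrib]
  simp only [Finset.sum_add_distrib, ← Finset.sum_mul, ← Finset.mul_sum]
  have huterm : ∀ u : U, (∑ b, dist (condU q u) g b) * -(margU q u * Real.logb 2 (margU q u))
      = -(margU q u * Real.logb 2 (margU q u)) := by
    intro u
    rcases eq_or_ne (margU q u) 0 with h | h
    · rw [h]; simp
    · rw [sum_dist, (condU_pmf q hq h).2, one_mul]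
  rw [Finset.sum_congr rfl (fun u _ => huterm u)]
  rw [dist_cU]

lemma dist_comp (q : X × Y × U → ℝ) (g : X × Y → B) (b : B) :
    dist q (fun a => g (cXY a)) b = dist (fun a : X × Y => ∑ u, q (a.1, a.2, u)) g b := by
  unfold dist
  rw [sum_triple (f := fun a => if g (cXY a) = b then q a else 0)]
  rw [Fintype.sum_prod_type (f := fun a : X × Y =>
    if g a = b then ∑ u, q (a.1, a.2, u) else 0)]
  congr 1; funext x; congr 1; funext y
  unfold cXY
  rcases eq_or_ne (g (x, y)) b with h | h
  · simp [h]
  · simp [h]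

/-- The master formula for the mutual informations. -/
lemma I2_formula (q : X × Y × U → ℝ) (hq : ∀ a, 0 ≤ q a) (g : X × Y → B) :
    I2 q (fun a => g (cXY a)) (cU : X × Y × U → U) =
      ent (dist (fun a : X × Y => ∑ u, q (a.1, a.2, u)) g)
        - ∑ u, margU q u * ent (dist (condU q u) g) := by
  unfold I2
  rw [H_pair_chain q hq g]
  have : H q (fun a => g (cXY a)) = ent (dist (fun a : X × Y => ∑ u, q (a.1, a.2, u)) g) := by
    rw [H_eq_ent]
    unfold ent
    congr 1
    funext b
    rw [dist_comp]
  rw [this]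
  ring

end Auxiliary

section Part3

open Finset

variable {X Y : Type} [Fintype X] [Fintype Y]

lemma cont_phi : Continuous (fun t : ℝ => -(t * Real.logb 2 t)) := by
  have h : (fun t : ℝ => -(t * Real.logb 2 t)) = fun t => -(t * Real.log t / Real.log 2) := by
    funext t
    rw [Real.logb]
    ring
  rw [h]
  exact ((Real.continuous_mul_log.div_const _)).neg

lemma cont_distg {A B : Type} [Fintype A] [Fintype B] (g : A → B) (b : B) :
    Continuous (fun s : A → ℝ => dist s g b) := by
  unfold dist
  apply continuous_finset_sum
  intro a _
  by_cases h : g a = b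
  · simp only [if_pos h]
    exact continuous_apply a
  · simp only [if_neg h]
    exact continuous_const

lemma cont_entg {A B : Type} [Fintype A] [Fintype B] (g : A → B) :
    Continuous (fun s : A → ℝ => ent (dist s g)) := by
  unfold ent
  apply continuous_finset_sum
  intro b _
  exact cont_phi.comp (cont_distg g b)

lemma I2_eval {U : Type} [Fintype U] {B : Type} [Fintype B]
    (p : X × Y → ℝ) (q : X × Y × U → ℝ) (hq : IsAux p q) (g : X × Y → B) :
    I2 q (fun a => g (cXY a)) (cU : X × Y × U → U) =
      ent (dist p g) - ∑ u, margU q u * ent (dist (condU q u) g) := by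
  rw [I2_formula q hq.1.1 g]
  have hmarg : (fun a : X × Y => ∑ u, q (a.1, a.2, u)) = p := by
    funext a
    rcases a with ⟨x, y⟩
    exact hq.2 x y
  rw [hmarg]

lemma filter_sum_eq {U : Type} [Fintype U] (w : U → ℝ) (f : U → ℝ) :
    ∑ u ∈ Finset.univ.filter (fun u => w u ≠ 0), w u * f u = ∑ u, w u * f u := by
  apply Finset.sum_filter_of_ne
  intro x _ h hx
  rw [hx, zero_mul] at h
  exact h rfl


def Phi {X Y : Type} [Fintype X] [Fintype Y] (a₀ : X × Y) (s : X × Y → ℝ) :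
    ({a : X × Y // a ≠ a₀} → ℝ) × ℝ × ℝ × ℝ :=
  (fun a => s a.1, ent (dist s Prod.fst), ent (dist s Prod.snd), ent (dist s id))

lemma sum_split_a₀ {A : Type} [Fintype A] (a₀ : A) (s : A → ℝ) :
    ∑ a, s a = s a₀ + ∑ a' : {a : A // a ≠ a₀}, s a'.1 := by
  rw [← Finset.sum_subtype (Finset.univ.erase a₀)
    (fun x => by simp [Finset.mem_erase]) (fun a => s a)]
  rw [Finset.add_sum_erase _ s (Finset.mem_univ a₀)]

/-- The cardinality-reduction step. -/
lemma reduce (p : X × Y → ℝ) (hp : IsPMF p)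
    (U : Type) [Fintype U] (q : X × Y × U → ℝ) (hq : IsAux p q) :
    ∃ (U' : Type) (_ : Fintype U') (q' : X × Y × U' → ℝ),
      Fintype.card U' ≤ Fintype.card X * Fintype.card Y + 2 ∧ IsAux p q' ∧
      I2 q' cX cU = I2 q cX cU ∧ I2 q' cY cU = I2 q cY cU ∧
      I2 q' cXY cU = I2 q cXY cU := by
  classical
  have hq0 : ∀ a, 0 ≤ q a := hq.1.1
  have hA : Nonempty (X × Y) := by
    by_contra h
    rw [not_nonempty_iff] at h
    have h2 := hp.2
    rw [Finset.univ_eq_empty] at h2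
    simp at h2
  have hcardA : 1 ≤ Fintype.card (X × Y) := Fintype.card_pos
  obtain ⟨a₀⟩ := hA
  have hΦcont : Continuous (Phi (X := X) (Y := Y) a₀) := by
    unfold Phi
    refine Continuous.prodMk ?_ (Continuous.prodMk ?_ (Continuous.prodMk ?_ ?_))
    · exact continuous_pi (fun a => continuous_apply a.1)
    · exact cont_entg Prod.fst
    · exact cont_entg Prod.snd
    · exact cont_entg id
  have hppmf : p ∈ stdSimplex ℝ (X × Y) := ⟨hp.1, hp.2⟩
  have hSpc : IsPathConnected (Phi a₀ '' stdSimplex ℝ (X × Y)) :=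
    ((convex_stdSimplex ℝ _).isPathConnected ⟨p, hppmf⟩).image hΦcont
  set w : U → ℝ := margU q with hwdef
  have hw0 : ∀ u, 0 ≤ w u := margU_nonneg q hq0
  have hwsum : ∑ u, w u = 1 := by
    rw [hwdef]
    unfold margU
    rw [Finset.sum_comm]
    have hma : ∀ a : X × Y, ∑ u, q (a.1, a.2, u) = p a := fun a => hq.2 a.1 a.2
    rw [Finset.sum_congr rfl (fun a _ => hma a)]
    exact hp.2
  set m : ({a : X × Y // a ≠ a₀} → ℝ) × ℝ × ℝ × ℝ := (fun a => p a.1,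
      ∑ u, w u * ent (dist (condU q u) Prod.fst),
      ∑ u, w u * ent (dist (condU q u) Prod.snd),
      ∑ u, w u * ent (dist (condU q u) id)) with hmdef
  -- m is in the convex hull of the graph
  have hm : m ∈ convexHull ℝ (Phi a₀ '' stdSimplex ℝ (X × Y)) := by
    have hsupp : ∑ u ∈ Finset.univ.filter (fun u => w u ≠ 0), w u = 1 := by
      rw [Finset.sum_filter_of_ne (fun x _ h => h)]
      exact hwsum
    have hmem := Finset.centerMass_mem_convexHull
      (Finset.univ.filter (fun u => w u ≠ 0)) (w := w) (z := fun u => Phi a₀ (condU q u))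
      (fun i _ => hw0 i) (by rw [hsupp]; norm_num)
      (fun i hi => Set.mem_image_of_mem (Phi a₀)
        (show condU q i ∈ stdSimplex ℝ (X × Y) from
          ⟨(condU_pmf q hq0 (Finset.mem_filter.mp hi).2).1,
           (condU_pmf q hq0 (Finset.mem_filter.mp hi).2).2⟩))
    rw [Finset.centerMass_eq_of_sum_1 _ _ hsupp] at hmem
    have hcmeq : ∑ u ∈ Finset.univ.filter (fun u => w u ≠ 0), w u • Phi a₀ (condU q u) = m := by
      have hzero : ∀ u, w u = 0 → ∀ a : X × Y, condU q u a = 0 := by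
        intro u hu a
        unfold condU
        rw [hwdef] at hu
        rw [margU_eq_zero q hq0 hu]
        simp
      refine Prod.ext ?_ (Prod.ext ?_ (Prod.ext ?_ ?_))
      · show (∑ u ∈ Finset.univ.filter (fun u => w u ≠ 0), w u • Phi a₀ (condU q u)).1
            = fun a => p a.1
        funext a'
        rw [Prod.fst_sum, Finset.sum_apply]
        have h1 : ∀ u ∈ Finset.univ.filter (fun u => w u ≠ 0),
            (w u • Phi a₀ (condU q u)).1 a' = w u * condU q u a'.1 := fun u _ => rfl
        rw [Finset.sum_congr rfl h1, filter_sum_eq w (fun u => condU q u a'.1)]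
        have h2 : ∀ u, w u * condU q u a'.1 = q (a'.1.1, a'.1.2, u) := by
          intro u
          rw [hwdef]
          exact margU_mul_condU q hq0 u a'.1
        rw [Finset.sum_congr rfl (fun u _ => h2 u)]
        rw [hq.2 a'.1.1 a'.1.2]
      · show (∑ u ∈ Finset.univ.filter (fun u => w u ≠ 0), w u • Phi a₀ (condU q u)).2.1
            = ∑ u, w u * ent (dist (condU q u) Prod.fst)
        rw [Prod.snd_sum, Prod.fst_sum]
        exact filter_sum_eq w (fun u => ent (dist (condU q u) Prod.fst))
      · show (∑ u ∈ Finset.univ.filter (fun u => w u ≠ 0), w u • Phi a₀ (condU q u)).2.2.1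
            = ∑ u, w u * ent (dist (condU q u) Prod.snd)
        rw [Prod.snd_sum, Prod.snd_sum, Prod.fst_sum]
        exact filter_sum_eq w (fun u => ent (dist (condU q u) Prod.snd))
      · show (∑ u ∈ Finset.univ.filter (fun u => w u ≠ 0), w u • Phi a₀ (condU q u)).2.2.2
            = ∑ u, w u * ent (dist (condU q u) id)
        rw [Prod.snd_sum, Prod.snd_sum, Prod.snd_sum]
        exact filter_sum_eq w (fun u => ent (dist (condU q u) id))
    rwa [hcmeq] at hmem
  -- dimension computation
  have hdim : Module.finrank ℝ (({a : X × Y // a ≠ a₀} → ℝ) × ℝ × ℝ × ℝ)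
      ≤ Fintype.card X * Fintype.card Y + 2 := by
    have h1 : Module.finrank ℝ (({a : X × Y // a ≠ a₀} → ℝ) × ℝ × ℝ × ℝ) =
        Fintype.card {a : X × Y // a ≠ a₀} + (1 + (1 + 1)) := by
      rw [Module.finrank_prod, Module.finrank_prod, Module.finrank_prod,
        Module.finrank_pi, Module.finrank_self]
    have h2 : Fintype.card {a : X × Y // a ≠ a₀} = Fintype.card (X × Y) - 1 := by
      have := Fintype.card_subtype_compl (fun a : X × Y => a = a₀)
      rw [Fintype.card_subtype_eq] at this
      exact this
    rw [h1, h2, Fintype.card_prod] at *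
    omega
  -- apply Fenchel–Eggleston
  obtain ⟨t, htS, htcard, hmt⟩ := fe_lemma hSpc hm (by omega) hdim
  rw [Finset.convexHull_eq] at hmt
  obtain ⟨w', hw'0, hw'1, hw'cm⟩ := hmt
  have hcm : ∑ y ∈ t, w' y • y = m := by
    rw [← hw'cm, Finset.centerMass_eq_of_sum_1 _ _ hw'1]
    rfl
  -- coordinates of the convex-combination identity
  have hc1 : ∀ a' : {a : X × Y // a ≠ a₀}, ∑ y ∈ t, w' y * y.1 a' = p a'.1 := by
    intro a'
    have := congrArg (fun z : ({a : X × Y // a ≠ a₀} → ℝ) × ℝ × ℝ × ℝ => z.1 a') hcm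
    simpa [Prod.fst_sum, Prod.snd_sum, Prod.smul_fst, Prod.smul_snd, Finset.sum_apply, smul_eq_mul] using this
  have hc2 : ∑ y ∈ t, w' y * y.2.1 = ∑ u, w u * ent (dist (condU q u) Prod.fst) := by
    have := congrArg (fun z : ({a : X × Y // a ≠ a₀} → ℝ) × ℝ × ℝ × ℝ => z.2.1) hcm
    simpa [Prod.fst_sum, Prod.snd_sum, Prod.smul_fst, Prod.smul_snd, smul_eq_mul] using this
  have hc3 : ∑ y ∈ t, w' y * y.2.2.1 = ∑ u, w u * ent (dist (condU q u) Prod.snd) := by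
    have := congrArg (fun z : ({a : X × Y // a ≠ a₀} → ℝ) × ℝ × ℝ × ℝ => z.2.2.1) hcm
    simpa [Prod.fst_sum, Prod.snd_sum, Prod.smul_fst, Prod.smul_snd, smul_eq_mul] using this
  have hc4 : ∑ y ∈ t, w' y * y.2.2.2 = ∑ u, w u * ent (dist (condU q u) id) := by
    have := congrArg (fun z : ({a : X × Y // a ≠ a₀} → ℝ) × ℝ × ℝ × ℝ => z.2.2.2) hcm
    simpa [Prod.fst_sum, Prod.snd_sum, Prod.smul_fst, Prod.smul_snd, smul_eq_mul] using this
  -- choose preimages under Φ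
  have hpre : ∀ e : {y // y ∈ t}, ∃ s, s ∈ stdSimplex ℝ (X × Y) ∧ Phi a₀ s = e.1 := by
    intro e
    have := htS (Finset.mem_coe.mpr e.2)
    obtain ⟨s, hs, hse⟩ := this
    exact ⟨s, hs, hse⟩
  set ρ : {y // y ∈ t} → (X × Y → ℝ) := fun e => Classical.choose (hpre e) with hρdef
  have hρ : ∀ e, ρ e ∈ stdSimplex ℝ (X × Y) ∧ Phi a₀ (ρ e) = e.1 :=
    fun e => Classical.choose_spec (hpre e)
  have hρ0 : ∀ e a, 0 ≤ ρ e a := fun e => (hρ e).1.1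
  have hρ1 : ∀ e, ∑ a, ρ e a = 1 := fun e => (hρ e).1.2
  have hρcoord : ∀ e (a' : {a : X × Y // a ≠ a₀}), ρ e a'.1 = e.1.1 a' :=
    fun e a' => congrFun (congrArg (fun z : ({a : X × Y // a ≠ a₀} → ℝ) × ℝ × ℝ × ℝ => z.1) (hρ e).2) a'
  have hρent1 : ∀ e, ent (dist (ρ e) Prod.fst) = e.1.2.1 :=
    fun e => congrArg (fun z : ({a : X × Y // a ≠ a₀} → ℝ) × ℝ × ℝ × ℝ => z.2.1) (hρ e).2
  have hρent2 : ∀ e, ent (dist (ρ e) Prod.snd) = e.1.2.2.1 :=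
    fun e => congrArg (fun z : ({a : X × Y // a ≠ a₀} → ℝ) × ℝ × ℝ × ℝ => z.2.2.1) (hρ e).2
  have hρent3 : ∀ e, ent (dist (ρ e) id) = e.1.2.2.2 :=
    fun e => congrArg (fun z : ({a : X × Y // a ≠ a₀} → ℝ) × ℝ × ℝ × ℝ => z.2.2.2) (hρ e).2
  -- the new auxiliary random variable
  set q' : X × Y × {y // y ∈ t} → ℝ :=
    (fun a => w' a.2.2.1 * ρ a.2.2 (a.1, a.2.1)) with hq'def
  have hq'0 : ∀ a, 0 ≤ q' a := fun a => mul_nonneg (hw'0 _ a.2.2.2) (hρ0 _ _)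
  have hmarg' : ∀ e : {y // y ∈ t}, margU q' e = w' e.1 := by
    intro e
    show ∑ a : X × Y, q' (a.1, a.2, e) = w' e.1
    have h1 : ∀ a : X × Y, q' (a.1, a.2, e) = w' e.1 * ρ e a := fun a => rfl
    rw [Finset.sum_congr rfl (fun a _ => h1 a), ← Finset.mul_sum, hρ1 e, mul_one]
  have hmargXY : ∀ x y, ∑ e : {y // y ∈ t}, q' (x, y, e) = p (x, y) := by
    intro x y
    have hsummand : ∀ e : {y // y ∈ t}, q' (x, y, e) = w' e.1 * ρ e (x, y) :=
      fun e => rfl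
    rw [Finset.sum_congr rfl (fun e _ => hsummand e)]
    have hsplit : ∀ s : X × Y → ℝ,
        ∑ a, s a = s a₀ + ∑ a' : {a : X × Y // a ≠ a₀}, s a'.1 := by
      intro s
      rw [← Finset.sum_subtype (Finset.univ.erase a₀)
        (fun x => by simp [Finset.mem_erase]) (fun a => s a)]
      rw [Finset.add_sum_erase _ s (Finset.mem_univ a₀)]
    by_cases hxy : (x, y) = a₀
    · have hρa : ∀ e : {y // y ∈ t},
          ρ e a₀ = 1 - ∑ a' : {a : X × Y // a ≠ a₀}, e.1.1 a' := by
        intro e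
        have h1 := hsplit (ρ e)
        rw [hρ1 e] at h1
        have h2 : ∑ a' : {a : X × Y // a ≠ a₀}, ρ e a'.1
            = ∑ a' : {a : X × Y // a ≠ a₀}, e.1.1 a' :=
          Finset.sum_congr rfl (fun a' _ => hρcoord e a')
        rw [h2] at h1
        linarith
      have hpa : p a₀ = 1 - ∑ a' : {a : X × Y // a ≠ a₀}, p a'.1 := by
        have h1 := hsplit p
        rw [hp.2] at h1
        linarith
      rw [hxy]
      rw [Finset.sum_congr rfl (fun e _ => by rw [hρa e])]
      simp only [mul_sub, mul_one]
      rw [Finset.sum_sub_distrib]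
      have hs1 : ∑ e : {y // y ∈ t}, w' e.1 = 1 := by
        rw [Finset.sum_coe_sort t (fun y => w' y)]
        exact hw'1
      have hs2 : ∑ e : {y // y ∈ t}, w' e.1 * ∑ a' : {a : X × Y // a ≠ a₀}, e.1.1 a'
          = ∑ a' : {a : X × Y // a ≠ a₀}, p a'.1 := by
        rw [Finset.sum_congr rfl
          (fun e _ => Finset.mul_sum Finset.univ (fun a' => e.1.1 a') (w' e.1))]
        rw [Finset.sum_comm]
        refine Finset.sum_congr rfl (fun a' _ => ?_)
        rw [Finset.sum_coe_sort t (fun y => w' y * y.1 a')]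
        exact hc1 a'
      rw [hs1, hs2, hpa]
    · have h3 : ∀ e : {y // y ∈ t}, w' e.1 * ρ e (x, y)
          = w' e.1 * e.1.1 ⟨(x, y), hxy⟩ := by
        intro e
        rw [hρcoord e ⟨(x, y), hxy⟩]
      rw [Finset.sum_congr rfl (fun e _ => h3 e)]
      rw [Finset.sum_coe_sort t (fun y' => w' y' * y'.1 ⟨(x, y), hxy⟩)]
      exact hc1 ⟨(x, y), hxy⟩
  have haux' : IsAux p q' := by
    refine ⟨⟨hq'0, ?_⟩, hmargXY⟩
    rw [sum_triple q']
    rw [Finset.sum_congr rfl (fun x _ => Finset.sum_congr rfl (fun y _ => hmargXY x y))]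
    have h2 := hp.2
    rw [Fintype.sum_prod_type] at h2
    exact h2
  have hcond' : ∀ e : {y // y ∈ t}, w' e.1 ≠ 0 → condU q' e = ρ e := by
    intro e he
    funext a
    show q' (a.1, a.2, e) / margU q' e = ρ e a
    rw [hmarg' e]
    have h1 : q' (a.1, a.2, e) = w' e.1 * ρ e a := rfl
    rw [h1]
    exact mul_div_cancel_left₀ _ he
  have hval1 : ∑ e : {y // y ∈ t}, margU q' e * ent (dist (condU q' e) Prod.fst)
      = ∑ u, margU q u * ent (dist (condU q u) Prod.fst) := by
    have h1 : ∀ e : {y // y ∈ t}, margU q' e * ent (dist (condU q' e) Prod.fst)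
        = w' e.1 * e.1.2.1 := by
      intro e
      rw [hmarg' e]
      rcases eq_or_ne (w' e.1) 0 with h | h
      · rw [h, zero_mul, zero_mul]
      · rw [hcond' e h, hρent1 e]
    rw [Finset.sum_congr rfl (fun e _ => h1 e)]
    rw [Finset.sum_coe_sort t (fun y => w' y * y.2.1)]
    exact hc2
  have hval2 : ∑ e : {y // y ∈ t}, margU q' e * ent (dist (condU q' e) Prod.snd)
      = ∑ u, margU q u * ent (dist (condU q u) Prod.snd) := by
    have h1 : ∀ e : {y // y ∈ t}, margU q' e * ent (dist (condU q' e) Prod.snd)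
        = w' e.1 * e.1.2.2.1 := by
      intro e
      rw [hmarg' e]
      rcases eq_or_ne (w' e.1) 0 with h | h
      · rw [h, zero_mul, zero_mul]
      · rw [hcond' e h, hρent2 e]
    rw [Finset.sum_congr rfl (fun e _ => h1 e)]
    rw [Finset.sum_coe_sort t (fun y => w' y * y.2.2.1)]
    exact hc3
  have hval3 : ∑ e : {y // y ∈ t}, margU q' e * ent (dist (condU q' e) id)
      = ∑ u, margU q u * ent (dist (condU q u) id) := by
    have h1 : ∀ e : {y // y ∈ t}, margU q' e * ent (dist (condU q' e) id)
        = w' e.1 * e.1.2.2.2 := by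
      intro e
      rw [hmarg' e]
      rcases eq_or_ne (w' e.1) 0 with h | h
      · rw [h, zero_mul, zero_mul]
      · rw [hcond' e h, hρent3 e]
    rw [Finset.sum_congr rfl (fun e _ => h1 e)]
    rw [Finset.sum_coe_sort t (fun y => w' y * y.2.2.2)]
    exact hc4
  refine ⟨{y // y ∈ t}, inferInstance, q', ?_, haux', ?_, ?_, ?_⟩
  · rw [Fintype.card_coe]
    exact htcard
  · have e1 : I2 q (cX : X × Y × U → X) (cU : X × Y × U → U)
        = ent (dist p Prod.fst) - ∑ u, margU q u * ent (dist (condU q u) Prod.fst) :=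
      I2_eval p q hq Prod.fst
    have e2 : I2 q' (cX : X × Y × {y // y ∈ t} → X) (cU : X × Y × {y // y ∈ t} → {y // y ∈ t})
        = ent (dist p Prod.fst)
          - ∑ e : {y // y ∈ t}, margU q' e * ent (dist (condU q' e) Prod.fst) :=
      I2_eval p q' haux' Prod.fst
    rw [e1, e2, hval1]
  · have e1 : I2 q (cY : X × Y × U → Y) (cU : X × Y × U → U)
        = ent (dist p Prod.snd) - ∑ u, margU q u * ent (dist (condU q u) Prod.snd) :=
      I2_eval p q hq Prod.snd
    have e2 : I2 q' (cY : X × Y × {y // y ∈ t} → Y) (cU : X × Y × {y // y ∈ t} → {y // y ∈ t})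
        = ent (dist p Prod.snd)
          - ∑ e : {y // y ∈ t}, margU q' e * ent (dist (condU q' e) Prod.snd) :=
      I2_eval p q' haux' Prod.snd
    rw [e1, e2, hval2]
  · have e1 : I2 q (cXY : X × Y × U → X × Y) (cU : X × Y × U → U)
        = ent (dist p id) - ∑ u, margU q u * ent (dist (condU q u) id) :=
      I2_eval p q hq id
    have e2 : I2 q' (cXY : X × Y × {y // y ∈ t} → X × Y)
          (cU : X × Y × {y // y ∈ t} → {y // y ∈ t})
        = ent (dist p id)
          - ∑ e : {y // y ∈ t}, margU q' e * ent (dist (condU q' e) id) :=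
      I2_eval p q' haux' id
    rw [e1, e2, hval3]

end Part3


/-- cardinality bound: every point of `𝓘_{XY}` is achieved by an auxiliary
random variable whose range has at most `|𝒳|·|𝒴| + 2` elements. -/
theorem stmt8 {X Y : Type} [Fintype X] [Fintype Y] (p : X × Y → ℝ) (hp : IsPMF p) :
    MIRegion p =
      { v | ∃ (U : Type) (_ : Fintype U) (q : X × Y × U → ℝ),
          Fintype.card U ≤ Fintype.card X * Fintype.card Y + 2 ∧ IsAux p q ∧
          v = (I2 q cX cU, I2 q cY cU, I2 q cXY cU) } := by
  ext v
  constructor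
  · rintro ⟨U, instU, q, haux, hv⟩
    obtain ⟨U', instU', q', hcard, haux', h1, h2, h3⟩ :=
      @reduce X Y _ _ p hp U instU q haux
    refine ⟨U', instU', q', hcard, haux', ?_⟩
    rw [hv, h1, h2, h3]
  · rintro ⟨U, instU, q, _, haux, hv⟩
    exact ⟨U, instU, q, haux, hv⟩

end GW
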